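/- At the critical time scale C = 1/s, the solution satisfies x_N((log N)/s + t) → 1 - s/(s + m·e^{st}) as N → ∞, for every fixed t ∈ ℝ. Moreover the limit function t ↦ 1 - s/(s + m·e^{st}) tends to 1 as t → ∞ and to 0 as t → -∞. -/

import Mathlib

open Real Filter
open scoped Topology

/-- The solution of the single-site deterministic Fisher-Wright ODE with mutation rate `m/N`
and selection rate `s`, started from `x_N(0) = 0`. -/
noncomputable def xN (m s : ℝ) (N : ℕ) (t : ℝ) : ℝ :=
  1 - (s + m / (N : ℝ)) / (s + m / (N : ℝ) * Real.exp ((s + m / (N : ℝ)) * t))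

/-- At the critical time scale `(log N)/s + t`, the mutant frequency converges to
`1 - s/(s + m e^{st})`; the limit function tends to `1` as `t → ∞` and to `0` as `t → -∞`. -/
theorem xN_critical_time_scale (m s : ℝ) (hm : 0 < m) (hs : 0 < s) :
    (∀ t : ℝ,
      Tendsto (fun N : ℕ => xN m s N (Real.log (N : ℝ) / s + t)) atTop
        (𝓝 (1 - s / (s + m * Real.exp (s * t))))) ∧
    Tendsto (fun t : ℝ => 1 - s / (s + m * Real.exp (s * t))) atTop (𝓝 1) ∧
    Tendsto (fun t : ℝ => 1 - s / (s + m * Real.exp (s * t))) atBot (𝓝 0) := by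
  refine ⟨fun t => ?_, ?_, ?_⟩
  · have hden : 0 < s + m * Real.exp (s * t) := by positivity
    have h1 : Tendsto (fun N : ℕ => m / (N : ℝ)) atTop (𝓝 0) :=
      tendsto_const_div_atTop_nhds_zero_nat m
    have hnum : Tendsto (fun N : ℕ => s + m / (N : ℝ)) atTop (𝓝 s) := by
      simpa using tendsto_const_nhds.add h1
    have hlog : Tendsto (fun N : ℕ => Real.log (N : ℝ) / (N : ℝ)) atTop (𝓝 0) :=
      Real.isLittleO_log_id_atTop.tendsto_div_nhds_zero.comp tendsto_natCast_atTop_atTop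
    have hexp : Tendsto
        (fun N : ℕ => m / s * (Real.log (N : ℝ) / (N : ℝ)) + (s + m / (N : ℝ)) * t)
        atTop (𝓝 (s * t)) := by
      have := (hlog.const_mul (m / s)).add (hnum.mul_const t)
      simpa using this
    have hden' : Tendsto
        (fun N : ℕ => s + m * Real.exp
          (m / s * (Real.log (N : ℝ) / (N : ℝ)) + (s + m / (N : ℝ)) * t))
        atTop (𝓝 (s + m * Real.exp (s * t))) :=
      tendsto_const_nhds.add
        (tendsto_const_nhds.mul ((Real.continuous_exp.tendsto _).comp hexp))
    have hnice : Tendsto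
        (fun N : ℕ => 1 - (s + m / (N : ℝ)) / (s + m * Real.exp
          (m / s * (Real.log (N : ℝ) / (N : ℝ)) + (s + m / (N : ℝ)) * t)))
        atTop (𝓝 (1 - s / (s + m * Real.exp (s * t)))) :=
      tendsto_const_nhds.sub (hnum.div hden' hden.ne')
    have heq : ∀ᶠ N : ℕ in atTop,
        (fun N : ℕ => 1 - (s + m / (N : ℝ)) / (s + m * Real.exp
          (m / s * (Real.log (N : ℝ) / (N : ℝ)) + (s + m / (N : ℝ)) * t))) N
          = xN m s N (Real.log (N : ℝ) / s + t) := by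
      filter_upwards [eventually_ge_atTop 1] with N hN
      have hN0 : (0:ℝ) < (N : ℝ) := by exact_mod_cast hN
      unfold xN
      congr 2
      have hsplit : Real.exp (m / s * (Real.log (N : ℝ) / (N : ℝ)) + (s + m / (N : ℝ)) * t
            + Real.log (N : ℝ))
          = Real.exp (m / s * (Real.log (N : ℝ) / (N : ℝ)) + (s + m / (N : ℝ)) * t) * (N : ℝ) := by
        rw [Real.exp_add, Real.exp_log hN0]
      rw [show (s + m / (N : ℝ)) * (Real.log (N : ℝ) / s + t)
          = m / s * (Real.log (N : ℝ) / (N : ℝ)) + (s + m / (N : ℝ)) * t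
            + Real.log (N : ℝ) by field_simp; ring, hsplit]
      field_simp
    exact hnice.congr' heq
  · have hd : Tendsto (fun t : ℝ => s + m * Real.exp (s * t)) atTop atTop := by
      apply tendsto_atTop_add_const_left
      exact (Real.tendsto_exp_atTop.comp (tendsto_id.const_mul_atTop hs)).const_mul_atTop hm
    have := Tendsto.div_atTop (tendsto_const_nhds (x := s)) hd
    simpa using tendsto_const_nhds.sub this
  · have hexp : Tendsto (fun t : ℝ => Real.exp (s * t)) atBot (𝓝 0) :=
      Real.tendsto_exp_atBot.comp ((tendsto_const_mul_atBot_of_pos hs).mpr tendsto_id)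
    have hd : Tendsto (fun t : ℝ => s + m * Real.exp (s * t)) atBot (𝓝 s) := by
      simpa using tendsto_const_nhds.add (hexp.const_mul m)
    have h2 := (tendsto_const_nhds (x := s)).div hd hs.ne'
    have h3 := (tendsto_const_nhds (x := (1:ℝ))).sub h2
    rw [div_self hs.ne', sub_self] at h3
    exact h3
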